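/- Bell-state decomposition over a unitary basis: let q ≥ 2 and let ℰ be a finite family of q² unitary q×q complex matrices that are pairwise trace-orthogonal, i.e. Tr(E F†) = 0 for distinct E, F ∈ ℰ. Let |β⟩ = q^{−1/2} Σ_{j=0}^{q−1} |j⟩⊗|j⟩ ∈ ℂ^q ⊗ ℂ^q. Then |β⟩⟨β| = q^{−2} Σ_{E ∈ ℰ} E ⊗ E̅, where E̅ denotes the entrywise complex conjugate of E and ⊗ is the Kronecker product. -/

import Mathlib

open Matrix
open scoped BigOperators ComplexConjugate Kronecker

noncomputable section

/-- The (normalized) maximally entangled Bell state `|β⟩ = q^{-1/2} Σⱼ |j⟩⊗|j⟩`. -/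
def bell (q : ℕ) : Fin q × Fin q → ℂ :=
  fun jk => if jk.1 = jk.2 then ((Real.sqrt q : ℝ) : ℂ)⁻¹ else 0

/-- Bell-state decomposition over a unitary basis:
`|β⟩⟨β| = q^{-2} Σ_{E ∈ ℰ} E ⊗ E̅`. -/
theorem stmt18 (q : ℕ) (hq : 2 ≤ q)
    (E : Fin (q ^ 2) → Matrix (Fin q) (Fin q) ℂ)
    (hunit : ∀ i, E i ∈ Matrix.unitaryGroup (Fin q) ℂ)
    (horth : ∀ i j, i ≠ j → Matrix.trace (E i * (E j)ᴴ) = 0) :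
    Matrix.vecMulVec (bell q) (fun w => (starRingEnd ℂ) (bell q w)) =
      ((q : ℂ) ^ 2)⁻¹ • ∑ i, (E i) ⊗ₖ ((E i).map (starRingEnd ℂ)) := by
  have hq0 : (q : ℂ) ≠ 0 := by
    exact_mod_cast (by omega : q ≠ 0)
  set M : Matrix (Fin (q ^ 2)) (Fin q × Fin q) ℂ := fun i p => E i p.1 p.2 with hMdef
  have htr : ∀ i j, (∑ p : Fin q × Fin q, E i p.1 p.2 * star (E j p.1 p.2)) =
      Matrix.trace (E i * (E j)ᴴ) := by
    intro i j
    rw [Fintype.sum_prod_type]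
    simp only [Matrix.trace, Matrix.diag, Matrix.mul_apply, Matrix.conjTranspose_apply]
  have hM : M * Mᴴ = (q : ℂ) • 1 := by
    ext i j
    simp only [mul_apply, conjTranspose_apply, Matrix.smul_apply, one_apply, smul_eq_mul]
    simp only [hMdef]
    rw [htr i j]
    by_cases hij : i = j
    · subst hij
      have h1 : E i * (E i)ᴴ = 1 := by
        have := (Matrix.mem_unitaryGroup_iff.mp (hunit i))
        simpa [Matrix.star_eq_conjTranspose] using this
      rw [h1, Matrix.trace_one]
      simp
    · rw [horth i j hij, if_neg hij, mul_zero]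
  have e : Fin (q ^ 2) ≃ Fin q × Fin q := (finCongr (sq q)).trans finProdFinEquiv.symm
  have hM1 : M * ((q : ℂ)⁻¹ • Mᴴ) = 1 := by
    rw [Matrix.mul_smul, hM, smul_smul, inv_mul_cancel₀ hq0, one_smul]
  have hM2 : ((q : ℂ)⁻¹ • Mᴴ) * M = 1 := (Matrix.mul_eq_one_comm_of_equiv e).mp hM1
  have hM3 : Mᴴ * M = (q : ℂ) • 1 := by
    have := congrArg (fun X => (q : ℂ) • X) hM2
    simpa [Matrix.smul_mul, smul_smul, mul_inv_cancel₀ hq0] using this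
  have hsum : ∀ a b c d : Fin q,
      (∑ i, (starRingEnd ℂ) (E i a b) * E i c d) =
        if a = c ∧ b = d then (q : ℂ) else 0 := by
    intro a b c d
    have h := congrFun (congrFun hM3 (a, b)) (c, d)
    simp only [mul_apply, conjTranspose_apply, Matrix.smul_apply, one_apply,
      smul_eq_mul, Prod.mk.injEq] at h
    simp only [hMdef] at h
    simp only [starRingEnd_apply]
    rw [h]
    split <;> simp
  ext ⟨a, c⟩ ⟨b, d⟩
  have key : (∑ i, E i a b * (starRingEnd ℂ) (E i c d)) =
      if a = c ∧ b = d then (q : ℂ) else 0 := by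
    have h := hsum a b c d
    calc (∑ i, E i a b * (starRingEnd ℂ) (E i c d))
        = (starRingEnd ℂ) (∑ i, (starRingEnd ℂ) (E i a b) * E i c d) := by
          rw [map_sum]
          apply Finset.sum_congr rfl
          intro i _
          simp [mul_comm]
      _ = _ := by rw [h]; split <;> simp
  simp only [vecMulVec_apply, Matrix.smul_apply, Matrix.sum_apply, kroneckerMap_apply, map_apply,
    smul_eq_mul, bell]
  rw [key]
  by_cases hac : a = c <;> by_cases hbd : b = d <;>
    simp [hac, hbd, Complex.conj_ofReal]
  rw [← mul_inv, ← Complex.ofReal_mul, Real.mul_self_sqrt (by positivity)]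
  field_simp
  simp [hq0]
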